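/- Let X be an n×n Hermitian matrix satisfying X^p ⪯ (p!/2)·A² in the Loewner order for every integer p ≥ 2, where A is a fixed Hermitian matrix. Then for every t ∈ (0,1): exp(tX) ⪯ I + tX + (t²/(2(1−t)))·A². -/

import Mathlib

open scoped ComplexOrder

section Aux
variable {N : Type*} [Fintype N]

lemma quadform_continuous (x : N → ℂ) :
    Continuous fun M : Matrix N N ℂ => dotProduct (star x) (M.mulVec x) := by
  unfold dotProduct Matrix.mulVec
  refine continuous_finset_sum _ fun i _ => Continuous.mul continuous_const ?_
  exact continuous_finset_sum _ fun j _ =>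
    ((continuous_apply j).comp (continuous_apply i) : Continuous fun M : Matrix N N ℂ => M i j).mul
      continuous_const

lemma hasSum_posSemidef {f : ℕ → Matrix N N ℂ} {M : Matrix N N ℂ}
    (hf : HasSum f M) (h : ∀ i, (f i).PosSemidef) : M.PosSemidef := by
  refine Matrix.posSemidef_iff_dotProduct_mulVec.mpr ⟨?_, ?_⟩
  · have hconj : HasSum (fun i => (f i).conjTranspose) M.conjTranspose :=
      hf.matrix_conjTranspose
    have hconj' : HasSum f M.conjTranspose := by
      refine hconj.congr_fun fun i => ?_
      exact ((h i).isHermitian.eq).symm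
    exact hconj'.unique hf
  · intro x
    set φ : Matrix N N ℂ →+ ℂ :=
      { toFun := fun M => dotProduct (star x) (M.mulVec x)
        map_zero' := by simp
        map_add' := fun a b => by simp [Matrix.add_mulVec, dotProduct_add] }
    have hφ : HasSum (fun i => dotProduct (star x) ((f i).mulVec x))
        (dotProduct (star x) (M.mulVec x)) :=
      hf.map φ (quadform_continuous x)
    have hre : HasSum (fun i => (dotProduct (star x) ((f i).mulVec x)).re)
        (dotProduct (star x) (M.mulVec x)).re := hφ.mapL Complex.reCLM
    have him : HasSum (fun i => (dotProduct (star x) ((f i).mulVec x)).im)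
        (dotProduct (star x) (M.mulVec x)).im := hφ.mapL Complex.imCLM
    have hterm : ∀ i, 0 ≤ dotProduct (star x) ((f i).mulVec x) := fun i => (h i).dotProduct_mulVec_nonneg x
    rw [Complex.le_def]
    constructor
    · simpa using hasSum_le (fun i => by simpa using (Complex.le_def.mp (hterm i)).1)
        hasSum_zero hre
    · have him' : HasSum (fun _ : ℕ => (0 : ℝ))
          (dotProduct (star x) (M.mulVec x)).im := by
        refine him.congr_fun fun i => ?_
        simpa using (Complex.le_def.mp (hterm i)).2
      simpa using (hasSum_zero.unique him')

lemma posSemidef_real_smul {c : ℝ} {M : Matrix N N ℂ} (hc : 0 ≤ c) (hM : M.PosSemidef) :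
    (c • M).PosSemidef := by
  refine Matrix.posSemidef_iff_dotProduct_mulVec.mpr ⟨?_, ?_⟩
  · show (c • M).conjTranspose = c • M
    rw [Matrix.conjTranspose_smul, hM.isHermitian.eq, star_trivial]
  · intro x
    have : dotProduct (star x) ((c • M).mulVec x)
        = c • dotProduct (star x) (M.mulVec x) := by
      rw [Matrix.smul_mulVec, dotProduct_smul]
    rw [this]
    exact smul_nonneg hc (hM.dotProduct_mulVec_nonneg x)

end Aux

/-- If a Hermitian matrix `X` satisfies `X^p ⪯ (p!/2) A²` in the Loewner order for
every integer `p ≥ 2`, then for every `t ∈ (0,1)`: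
`exp(tX) ⪯ I + tX + (t²/(2(1-t))) A²`. -/
theorem exp_subexponential_bound {n : ℕ}
    {X A : Matrix (Fin n) (Fin n) ℂ} (hX : X.IsHermitian) (hA : A.IsHermitian)
    (hmom : ∀ p : ℕ, 2 ≤ p →
      (((p.factorial : ℝ) / 2) • (A ^ 2) - X ^ p).PosSemidef)
    (t : ℝ) (ht0 : 0 < t) (ht1 : t < 1) :
    ((1 : Matrix (Fin n) (Fin n) ℂ) + t • X + (t ^ 2 / (2 * (1 - t))) • (A ^ 2) -
        NormedSpace.exp (t • X)).PosSemidef := by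
  have ht1' : (1 : ℝ) - t ≠ 0 := by linarith
  letI : SeminormedRing (Matrix (Fin n) (Fin n) ℂ) := Matrix.linftyOpSemiNormedRing
  letI : NormedRing (Matrix (Fin n) (Fin n) ℂ) := Matrix.linftyOpNormedRing
  letI : NormedAlgebra ℂ (Matrix (Fin n) (Fin n) ℂ) := Matrix.linftyOpNormedAlgebra
  have h1 : HasSum (fun p : ℕ => ((p.factorial : ℂ))⁻¹ • (t • X) ^ p)
      (NormedSpace.exp (t • X)) := NormedSpace.exp_series_hasSum_exp' (t • X)
  have h2 : HasSum (fun p : ℕ => ((p + 2).factorial : ℂ)⁻¹ • (t • X) ^ (p + 2))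
      (NormedSpace.exp (t • X) -
        ∑ i ∈ Finset.range 2, ((i.factorial : ℂ))⁻¹ • (t • X) ^ i) :=
    (hasSum_nat_add_iff' 2).mpr h1
  have hrange : ∑ i ∈ Finset.range 2, ((i.factorial : ℂ))⁻¹ • (t • X) ^ i
      = 1 + t • X := by
    simp [Finset.sum_range_succ]
  rw [hrange] at h2
  -- rewrite terms as real smul
  have hterm : ∀ p : ℕ, ((p + 2).factorial : ℂ)⁻¹ • (t • X) ^ (p + 2)
      = (t ^ (p + 2) / ((p + 2).factorial : ℝ)) • X ^ (p + 2) := by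
    intro p
    rw [smul_pow]
    rw [← Complex.coe_smul (t ^ (p + 2)), smul_smul, ← Complex.coe_smul, div_eq_inv_mul]
    push_cast
    ring_nf
  rw [show (fun p : ℕ => ((p + 2).factorial : ℂ)⁻¹ • (t • X) ^ (p + 2))
      = fun p : ℕ => (t ^ (p + 2) / ((p + 2).factorial : ℝ)) • X ^ (p + 2)
    from funext hterm] at h2
  -- geometric series
  have hg : HasSum (fun p : ℕ => t ^ p) (1 - t)⁻¹ :=
    hasSum_geometric_of_lt_one ht0.le ht1
  have hg2 : HasSum (fun p : ℕ => t ^ (p + 2))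
      ((1 - t)⁻¹ - ∑ i ∈ Finset.range 2, t ^ i) := (hasSum_nat_add_iff' 2).mpr hg
  have hw : HasSum (fun p : ℕ => t ^ (p + 2) • ((2 : ℝ)⁻¹ • A ^ 2))
      (((1 - t)⁻¹ - ∑ i ∈ Finset.range 2, t ^ i) • ((2 : ℝ)⁻¹ • A ^ 2)) :=
    hg2.smul_const _
  have hwsum : ((1 - t)⁻¹ - ∑ i ∈ Finset.range 2, t ^ i) • ((2 : ℝ)⁻¹ • A ^ 2)
      = (t ^ 2 / (2 * (1 - t))) • (A ^ 2) := by
    rw [smul_smul]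
    congr 1
    rw [Finset.sum_range_succ, Finset.sum_range_one]
    field_simp
    ring
  rw [hwsum] at hw
  have hdiff := hw.sub h2
  have hgoal : (1 : Matrix (Fin n) (Fin n) ℂ) + t • X + (t ^ 2 / (2 * (1 - t))) • (A ^ 2) -
      NormedSpace.exp (t • X)
      = (t ^ 2 / (2 * (1 - t))) • (A ^ 2) -
        (NormedSpace.exp (t • X) - (1 + t • X)) := by abel
  rw [hgoal]
  refine hasSum_posSemidef hdiff fun p => ?_
  have hfac : ((p + 2).factorial : ℝ) ≠ 0 := Nat.cast_ne_zero.mpr (p + 2).factorial_ne_zero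
  have : t ^ (p + 2) • ((2 : ℝ)⁻¹ • A ^ 2)
        - (t ^ (p + 2) / ((p + 2).factorial : ℝ)) • X ^ (p + 2)
      = (t ^ (p + 2) / ((p + 2).factorial : ℝ)) •
        ((((p + 2).factorial : ℝ) / 2) • (A ^ 2) - X ^ (p + 2)) := by
    rw [smul_sub, smul_smul, smul_smul]
    congr 2
    field_simp
  rw [this]
  exact posSemidef_real_smul
    (div_nonneg (pow_nonneg ht0.le _) (Nat.cast_nonneg _)) (hmom (p + 2) (by omega))
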